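/- Let G and H be graphs and let f, g : G → H be graph homomorphisms. Then f and g are ×-homotopic if and only if f and g belong to the same connected component of the poset Hom(G,H). -/

import Mathlib

structure XGraph where
  V : Type
  E : V → V → Prop
  symm : ∀ {x y}, E x y → E y x

def IsGraphHom (G H : XGraph) (f : G.V → H.V) : Prop :=
  ∀ {x y}, G.E x y → H.E (f x) (f y)

structure Walk (G : XGraph) (a b : G.V) where
  len : ℕ
  toFun : ℕ → G.V
  start_eq : toFun 0 = a
  end_eq : toFun len = b
  adj : ∀ i, i < len → G.E (toFun i) (toFun (i + 1))

structure MultiHom (G H : XGraph) where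
  toFun : G.V → Set H.V
  nonempty : ∀ x, (toFun x).Nonempty
  edge : ∀ {x y}, G.E x y → ∀ a ∈ toFun x, ∀ b ∈ toFun y, H.E a b

def MultiHom.le {G H : XGraph} (η η' : MultiHom G H) : Prop :=
  ∀ x, η.toFun x ⊆ η'.toFun x

def SameComponent {G H : XGraph} (η η' : MultiHom G H) : Prop :=
  Relation.ReflTransGen (fun a b => MultiHom.le a b ∨ MultiHom.le b a) η η'

def ofHom {G H : XGraph} (f : G.V → H.V) (hf : IsGraphHom G H f) : MultiHom G H where
  toFun x := {f x}
  nonempty x := ⟨f x, rfl⟩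
  edge := by
    intro x y hxy a ha b hb
    rw [Set.mem_singleton_iff] at ha hb
    subst ha; subst hb
    exact hf hxy

def prodI (G : XGraph) (n : ℕ) : XGraph where
  V := G.V × Fin (n + 1)
  E := fun p q => G.E p.1 q.1 ∧ p.2.val ≤ q.2.val + 1 ∧ q.2.val ≤ p.2.val + 1
  symm := by
    rintro p q ⟨h1, h2, h3⟩
    exact ⟨G.symm h1, h3, h2⟩

def MoveA {G : XGraph} {a b : G.V} (γ δ : Walk G a b) : Prop :=
  δ.len = γ.len + 2 ∧ ∃ k ≤ γ.len,
    (∀ i ≤ k, δ.toFun i = γ.toFun i) ∧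
    (∀ i, k ≤ i → i ≤ γ.len → δ.toFun (i + 2) = γ.toFun i)

def MoveB {G : XGraph} {a b : G.V} (γ δ : Walk G a b) : Prop :=
  γ.len = δ.len ∧ ∃ j, ∀ i ≤ γ.len, i ≠ j → γ.toFun i = δ.toFun i

def Eqv1 {G : XGraph} {a b : G.V} : Walk G a b → Walk G a b → Prop :=
  Relation.EqvGen MoveA

def Eqv2 {G : XGraph} {a b : G.V} : Walk G a b → Walk G a b → Prop :=
  Relation.EqvGen (fun γ δ => MoveA γ δ ∨ MoveB γ δ)

noncomputable def XGraph.dist (G : XGraph) (a b : G.V) : ℕ :=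
  sInf {n | ∃ γ : Walk G a b, γ.len = n}

def XGraph.Connected (G : XGraph) : Prop := ∀ a b : G.V, Nonempty (Walk G a b)

def XGraph.Bipartite (G : XGraph) : Prop :=
  ∃ c : G.V → ZMod 2, ∀ {x y}, G.E x y → c x ≠ c y

def constWalk {G : XGraph} (a : G.V) : Walk G a a :=
  ⟨0, fun _ => a, rfl, rfl, fun i hi => absurd hi (by omega)⟩

def Walk.concat {G : XGraph} {a b c : G.V} (γ : Walk G a b) (δ : Walk G b c) :
    Walk G a c where
  len := γ.len + δ.len
  toFun i := if i ≤ γ.len then γ.toFun i else δ.toFun (i - γ.len)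
  start_eq := by simp [γ.start_eq]
  end_eq := by
    by_cases h : δ.len = 0
    · have hbc : b = c := by
        have h1 := δ.end_eq
        rw [h, δ.start_eq] at h1
        exact h1
      simp [h, γ.end_eq, hbc]
    · have h1 : ¬ (γ.len + δ.len ≤ γ.len) := by omega
      try dsimp only
      rw [if_neg h1]
      have h2 : γ.len + δ.len - γ.len = δ.len := by omega
      rw [h2, δ.end_eq]
  adj := by
    intro i hi
    try dsimp only
    rcases lt_trichotomy i γ.len with h | h | h
    · rw [if_pos (by omega : i ≤ γ.len), if_pos (by omega : i + 1 ≤ γ.len)]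
      exact γ.adj i h
    · have hδ : 0 < δ.len := by omega
      rw [if_pos (by omega : i ≤ γ.len), if_neg (by omega : ¬ i + 1 ≤ γ.len)]
      have h2 : i + 1 - γ.len = 1 := by omega
      rw [h2, h, γ.end_eq]
      have h3 := δ.adj 0 hδ
      rw [δ.start_eq] at h3
      exact h3
    · rw [if_neg (by omega : ¬ i ≤ γ.len), if_neg (by omega : ¬ i + 1 ≤ γ.len)]
      have h2 : i + 1 - γ.len = (i - γ.len) + 1 := by omega
      rw [h2]
      exact δ.adj (i - γ.len) (by omega)

def Walk.reverse {G : XGraph} {a b : G.V} (γ : Walk G a b) : Walk G b a where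
  len := γ.len
  toFun i := γ.toFun (γ.len - i)
  start_eq := by simp [γ.end_eq]
  end_eq := by simp [γ.start_eq]
  adj := by
    intro i hi
    have h1 : γ.len - i = (γ.len - (i + 1)) + 1 := by omega
    have h2 := γ.adj (γ.len - (i + 1)) (by omega)
    rw [← h1] at h2
    exact G.symm h2

def Walk.map {G H : XGraph} (f : G.V → H.V) (hf : IsGraphHom G H f) {a b : G.V}
    (γ : Walk G a b) : Walk H (f a) (f b) where
  len := γ.len
  toFun i := f (γ.toFun i)
  start_eq := by (try dsimp only); rw [γ.start_eq]
  end_eq := by (try dsimp only); rw [γ.end_eq]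
  adj := fun i hi => hf (γ.adj i hi)

def Walk.pow {G : XGraph} {a : G.V} (γ : Walk G a a) : ℕ → Walk G a a
  | 0 => constWalk a
  | n + 1 => (Walk.pow γ n).concat γ

def Walk.zpow {G : XGraph} {a : G.V} (γ : Walk G a a) : ℤ → Walk G a a
  | Int.ofNat n => γ.pow n
  | Int.negSucc n => γ.reverse.pow (n + 1)
def finClip (n t : ℕ) : Fin (n + 1) := ⟨min t n, by omega⟩

def realizedWalk {G H : XGraph} {n : ℕ} (h : (prodI G n).V → H.V)
    (hh : IsGraphHom (prodI G n) H h) {v v' : G.V} (hvv' : G.E v v')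
    {w : H.V} (h0 : h (v, finClip n 0) = w) (hN : h (v, finClip n n) = w) :
    Walk H w w where
  len := 2 * n
  toFun i := if i % 2 = 0 then h (v, finClip n (i / 2)) else h (v', finClip n (i / 2))
  start_eq := by
    try dsimp only
    rw [if_pos (by norm_num : (0:ℕ) % 2 = 0), Nat.zero_div]
    exact h0
  end_eq := by
    try dsimp only
    rw [if_pos (by omega : (2 * n) % 2 = 0)]
    have h2 : 2 * n / 2 = n := by omega
    rw [h2]
    exact hN
  adj := by
    intro i hi
    try dsimp only
    rcases Nat.even_or_odd i with he | ho
    · obtain ⟨t, ht⟩ := he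
      rw [if_pos (by omega : i % 2 = 0), if_neg (by omega : ¬ (i + 1) % 2 = 0)]
      have h4 : (i + 1) / 2 = i / 2 := by omega
      rw [h4]
      refine hh ⟨hvv', ?_, ?_⟩ <;> (dsimp only; omega)
    · obtain ⟨t, ht⟩ := ho
      rw [if_neg (by omega : ¬ i % 2 = 0), if_pos (by omega : (i + 1) % 2 = 0)]
      refine hh ⟨G.symm hvv', ?_, ?_⟩ <;> (dsimp only [finClip]; omega)

def Realizable {G H : XGraph} (f : G.V → H.V) (v : G.V) (ω : Walk H (f v) (f v)) : Prop :=
  ∃ (n : ℕ) (h : (prodI G n).V → H.V) (hh : IsGraphHom (prodI G n) H h)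
    (hs : ∀ x, h (x, finClip n 0) = f x) (he : ∀ x, h (x, finClip n n) = f x)
    (v' : G.V) (_ : G.E v v'),
    Eqv2 ω (realizedWalk h hh ‹G.E v v'› (hs v) (he v))
def SquareFree (G : XGraph) : Prop :=
  (∀ x, ¬ G.E x x) ∧
  ¬ ∃ a b c d : G.V, a ≠ b ∧ a ≠ c ∧ a ≠ d ∧ b ≠ c ∧ b ≠ d ∧ c ≠ d ∧
    G.E a b ∧ G.E b c ∧ G.E c d ∧ G.E d a

def nbhd (G : XGraph) (v : G.V) : Set G.V := {y | G.E v y}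

def nbhd2 (G : XGraph) (v : G.V) : Set G.V := {z | ∃ y, G.E v y ∧ G.E y z}

def IsGraphCovering (G H : XGraph) (p : G.V → H.V) : Prop :=
  IsGraphHom G H p ∧ ∀ v : G.V, Set.BijOn p (nbhd G v) (nbhd H (p v))

def Is2CoveringMap (G H : XGraph) (p : G.V → H.V) : Prop :=
  IsGraphHom G H p ∧ ∀ v : G.V,
    Set.BijOn p (nbhd G v) (nbhd H (p v)) ∧ Set.BijOn p (nbhd2 G v) (nbhd2 H (p v))

def pushforward {G H1 H2 : XGraph} (p : H1.V → H2.V) (hp : IsGraphHom H1 H2 p)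
    (η : MultiHom G H1) : MultiHom G H2 where
  toFun x := p '' η.toFun x
  nonempty x := (η.nonempty x).image p
  edge := by
    rintro x y hxy a ⟨a', ha', rfl⟩ b ⟨b', hb', rfl⟩
    exact hp (η.edge hxy a' ha' b' hb')

def IsCycleWalk {G : XGraph} {a : G.V} (γ : Walk G a a) : Prop :=
  3 ≤ γ.len ∧ ∀ i j, i < γ.len → j < γ.len → γ.toFun i = γ.toFun j → i = j

def IsTree (T : XGraph) : Prop :=
  (∀ x, ¬ T.E x x) ∧ (∀ a b : T.V, Nonempty (Walk T a b)) ∧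
    ∀ (a : T.V) (γ : Walk T a a), ¬ IsCycleWalk γ

def IsPath {G : XGraph} {a b : G.V} (γ : Walk G a b) : Prop :=
  ∀ i j, i ≤ γ.len → j ≤ γ.len → γ.toFun i = γ.toFun j → i = j

def OnWalk {G : XGraph} {a b : G.V} (γ : Walk G a b) (y : G.V) : Prop :=
  ∃ i ≤ γ.len, γ.toFun i = y

def CrossHomotopic (G H : XGraph) (f g : G.V → H.V) : Prop :=
  ∃ (n : ℕ) (h : (prodI G n).V → H.V), IsGraphHom (prodI G n) H h ∧
    (∀ x, h (x, finClip n 0) = f x) ∧ (∀ x, h (x, finClip n n) = g x)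

def quotGraph (G : XGraph) (Γ : Type) [Group Γ] [MulAction Γ G.V] : XGraph where
  V := Quotient (MulAction.orbitRel Γ G.V)
  E := fun α β => ∃ x y : G.V, Quotient.mk (MulAction.orbitRel Γ G.V) x = α ∧
        Quotient.mk (MulAction.orbitRel Γ G.V) y = β ∧ G.E x y
  symm := by
    rintro α β ⟨x, y, hx, hy, hxy⟩
    exact ⟨y, x, hy, hx, G.symm hxy⟩
section AuxST1
variable {G H : XGraph}

noncomputable def selST1 (η : MultiHom G H) : G.V → H.V := fun x => (η.nonempty x).choose

lemma selST1_mem (η : MultiHom G H) (x : G.V) : selST1 η x ∈ η.toFun x :=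
  (η.nonempty x).choose_spec

lemma chST1_refl (f : G.V → H.V) (hf : IsGraphHom G H f) : CrossHomotopic G H f f :=
  ⟨0, fun p => f p.1, by intro p q hpq; exact hf hpq.1, fun _ => rfl, fun _ => rfl⟩

lemma chST1_trans {f g k : G.V → H.V} (h1 : CrossHomotopic G H f g)
    (h2 : CrossHomotopic G H g k) : CrossHomotopic G H f k := by
  obtain ⟨n, h, hh, hs, he⟩ := h1
  obtain ⟨m, h', hh', hs', he'⟩ := h2
  refine ⟨n + m, fun p => if p.2.val ≤ n then h (p.1, finClip n p.2.val)
      else h' (p.1, finClip m (p.2.val - n)), ?_, ?_, ?_⟩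
  · rintro p q ⟨hE, hle1, hle2⟩
    have hp := p.2.isLt; have hq := q.2.isLt
    dsimp only
    split_ifs with hi hj hj
    · exact hh ⟨hE, by simp only [finClip]; omega, by simp only [finClip]; omega⟩
    · have hi' : p.2.val = n := by omega
      have hj' : q.2.val = n + 1 := by omega
      have e1 : h (p.1, finClip n p.2.val) = h' (p.1, finClip m 0) := by
        rw [hi']; rw [he p.1, hs' p.1]
      rw [e1, hj']
      have e2 : n + 1 - n = 1 := by omega
      rw [e2]
      exact hh' ⟨hE, by simp only [finClip]; omega, by simp only [finClip]; omega⟩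
    · have hj' : q.2.val = n := by omega
      have hi' : p.2.val = n + 1 := by omega
      have e1 : h (q.1, finClip n q.2.val) = h' (q.1, finClip m 0) := by
        rw [hj']; rw [he q.1, hs' q.1]
      rw [e1, hi']
      have e2 : n + 1 - n = 1 := by omega
      rw [e2]
      exact hh' ⟨hE, by simp only [finClip]; omega, by simp only [finClip]; omega⟩
    · exact hh' ⟨hE, by simp only [finClip]; omega, by simp only [finClip]; omega⟩
  · intro x
    dsimp only
    rw [if_pos (by simp [finClip] : ((finClip (n + m) 0)).val ≤ n)]
    have e : finClip n (finClip (n + m) 0).val = finClip n 0 := by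
      simp [finClip, Fin.ext_iff]
    rw [e]; exact hs x
  · intro x
    have hv : (finClip (n + m) (n + m)).val = n + m := by simp [finClip]
    dsimp only
    split_ifs with hc
    · have hm : m = 0 := by rw [hv] at hc; omega
      subst hm
      have e : finClip n (finClip (n + 0) (n + 0)).val = finClip n n := by
        simp [finClip, Fin.ext_iff]
      rw [e, he x, ← hs' x]
      exact he' x
    · have e : finClip m ((finClip (n + m) (n + m)).val - n) = finClip m m := by
        simp [finClip, Fin.ext_iff]
      rw [e]; exact he' x

lemma selST1_step (η η' : MultiHom G H) (hle : MultiHom.le η η' ∨ MultiHom.le η' η) :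
    CrossHomotopic G H (selST1 η) (selST1 η') := by
  have hedge : ∀ {x y : G.V}, G.E x y → ∀ a ∈ η.toFun x ∪ η'.toFun x,
      ∀ b ∈ η.toFun y ∪ η'.toFun y, H.E a b := by
    rcases hle with hle | hle
    · intro x y hxy a ha b hb
      refine η'.edge hxy a ?_ b ?_
      · rcases ha with h | h; exacts [hle x h, h]
      · rcases hb with h | h; exacts [hle y h, h]
    · intro x y hxy a ha b hb
      refine η.edge hxy a ?_ b ?_
      · rcases ha with h | h; exacts [h, hle x h]
      · rcases hb with h | h; exacts [h, hle y h]
  have hmem : ∀ (x : G.V) (i : Fin 2),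
      (if i.val = 0 then selST1 η x else selST1 η' x) ∈ η.toFun x ∪ η'.toFun x := by
    intro x i
    split_ifs
    · exact Or.inl (selST1_mem η x)
    · exact Or.inr (selST1_mem η' x)
  refine ⟨1, fun p => if p.2.val = 0 then selST1 η p.1 else selST1 η' p.1, ?_, ?_, ?_⟩
  · rintro p q ⟨hE, _, _⟩
    exact hedge hE _ (hmem p.1 p.2) _ (hmem q.1 q.2)
  · intro x
    dsimp only
    rw [if_pos (by simp [finClip] : ((finClip 1 0)).val = 0)]
  · intro x
    dsimp only
    rw [if_neg (by simp [finClip] : ¬ ((finClip 1 1)).val = 0)]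

lemma sameComp_of_eqST1 {η η' : MultiHom G H} (h : ∀ x, η.toFun x = η'.toFun x) :
    SameComponent η η' :=
  Relation.ReflTransGen.single (Or.inl fun x => (h x).subset)

end AuxST1

theorem statement_1 (G H : XGraph) (f g : G.V → H.V)
    (hf : IsGraphHom G H f) (hg : IsGraphHom G H g) :
    CrossHomotopic G H f g ↔ SameComponent (ofHom f hf) (ofHom g hg) := by
  constructor
  · rintro ⟨n, h, hh, hs, he⟩
    have hFhom : ∀ i : ℕ, IsGraphHom G H (fun x => h (x, finClip n i)) := by
      intro i x y hxy
      exact hh ⟨hxy, by simp only [finClip]; omega, by simp only [finClip]; omega⟩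
    set F : ℕ → MultiHom G H := fun i => ofHom (fun x => h (x, finClip n i)) (hFhom i)
      with hF
    have step : ∀ i : ℕ, SameComponent (F i) (F (i + 1)) := by
      intro i
      have hedge : ∀ {x y : G.V}, G.E x y →
          ∀ a ∈ ({h (x, finClip n i), h (x, finClip n (i + 1))} : Set H.V),
          ∀ b ∈ ({h (y, finClip n i), h (y, finClip n (i + 1))} : Set H.V), H.E a b := by
        intro x y hxy a ha b hb
        simp only [Set.mem_insert_iff, Set.mem_singleton_iff] at ha hb
        rcases ha with rfl | rfl <;> rcases hb with rfl | rfl <;>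
          exact hh ⟨hxy, by simp only [finClip]; omega, by simp only [finClip]; omega⟩
      let ηi : MultiHom G H :=
        { toFun := fun x => {h (x, finClip n i), h (x, finClip n (i + 1))}
          nonempty := fun x => ⟨h (x, finClip n i), Or.inl rfl⟩
          edge := hedge }
      have le1 : MultiHom.le (F i) ηi := by
        intro x a ha
        simp only [hF, ofHom, Set.mem_singleton_iff] at ha
        exact Or.inl ha
      have le2 : MultiHom.le (F (i + 1)) ηi := by
        intro x a ha
        simp only [hF, ofHom, Set.mem_singleton_iff] at ha
        exact Or.inr (by rw [Set.mem_singleton_iff]; exact ha)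
      exact Relation.ReflTransGen.trans
        (Relation.ReflTransGen.single (Or.inl le1))
        (Relation.ReflTransGen.single (Or.inr le2))
    have chain : ∀ i : ℕ, SameComponent (F 0) (F i) := by
      intro i
      induction i with
      | zero => exact Relation.ReflTransGen.refl
      | succ k ih => exact Relation.ReflTransGen.trans ih (step k)
    refine Relation.ReflTransGen.trans (sameComp_of_eqST1 ?_)
      (Relation.ReflTransGen.trans (chain n) (sameComp_of_eqST1 ?_))
    · intro x
      show ({f x} : Set H.V) = {h (x, finClip n 0)}
      rw [hs x]
    · intro x
      show ({h (x, finClip n n)} : Set H.V) = {g x}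
      rw [he x]
  · intro hsc
    have self_eq : ∀ (k : G.V → H.V) (hk : IsGraphHom G H k), selST1 (ofHom k hk) = k := by
      intro k hk
      funext x
      have := selST1_mem (ofHom k hk) x
      simp only [ofHom, Set.mem_singleton_iff] at this
      exact this
    have key : ∀ η : MultiHom G H, SameComponent (ofHom f hf) η →
        CrossHomotopic G H f (selST1 η) := by
      intro η hη
      induction hη with
      | refl => rw [self_eq f hf]; exact chST1_refl f hf
      | tail _ hbc ih => exact chST1_trans ih (selST1_step _ _ hbc)
    have := key _ hsc
    rwa [self_eq g hg] at this
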